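/- Let μ⁰ = Σ_{n=1}^{N₀} p⁰ₙ δ_{x⁰ₙ} and μʲ = Σ_{m=1}^{Nⱼ} pʲₘ δ_{xʲₘ} be discrete probability measures on ℝ^d and let γ be an optimal coupling for OT(μ⁰,μʲ). Define the barycentric points x̂ₙ = (1/p⁰ₙ) Σ_{m=1}^{Nⱼ} γₙₘ xʲₘ and the OT barycentric projection μ̂ʲ = Σ_{n=1}^{N₀} p⁰ₙ δ_{x̂ₙ}. Then the diagonal matrix diag(p⁰₁,…,p⁰_{N₀}) is an optimal coupling for OT(μ⁰,μ̂ʲ): for every matrix γ̂ ∈ ℝ^{N₀×N₀} with nonnegative entries whose row sums and column sums both equal p⁰, one has Σ_{n=1}^{N₀} p⁰ₙ ‖x⁰ₙ − x̂ₙ‖² ≤ Σ_{n,k=1}^{N₀} γ̂ₙₖ ‖x⁰ₙ − x̂ₖ‖². -/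

import Mathlib

open scoped BigOperators

/-- If `γ` is an optimal coupling for the discrete optimal transport
problem between `μ⁰ = ∑ₙ p⁰ₙ δ_{x⁰ₙ}` and `μʲ = ∑ₘ pʲₘ δ_{xʲₘ}`, then the diagonal
coupling `diag(p⁰)` is optimal between `μ⁰` and the OT barycentric projection
`μ̂ʲ = ∑ₙ p⁰ₙ δ_{x̂ₙ}`, where `x̂ₙ = (p⁰ₙ)⁻¹ ∑ₘ γₙₘ xʲₘ`. -/
theorem ot_barycentric_projection_diag_optimal
    {d N0 Nj : ℕ}
    (p0 : Fin N0 → ℝ) (pj : Fin Nj → ℝ)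
    (x0 : Fin N0 → EuclideanSpace ℝ (Fin d)) (xj : Fin Nj → EuclideanSpace ℝ (Fin d))
    (hp0 : ∀ n, 0 < p0 n) (hpj : ∀ m, 0 < pj m)
    (hp0sum : ∑ n, p0 n = 1) (hpjsum : ∑ m, pj m = 1)
    (γ : Matrix (Fin N0) (Fin Nj) ℝ)
    (hγnn : ∀ n m, 0 ≤ γ n m)
    (hγrow : ∀ n, ∑ m, γ n m = p0 n)
    (hγcol : ∀ m, ∑ n, γ n m = pj m)
    (hγopt : ∀ γ' : Matrix (Fin N0) (Fin Nj) ℝ,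
      (∀ n m, 0 ≤ γ' n m) → (∀ n, ∑ m, γ' n m = p0 n) → (∀ m, ∑ n, γ' n m = pj m) →
      ∑ n, ∑ m, ‖x0 n - xj m‖ ^ 2 * γ n m ≤ ∑ n, ∑ m, ‖x0 n - xj m‖ ^ 2 * γ' n m)
    (xhat : Fin N0 → EuclideanSpace ℝ (Fin d))
    (hxhat : ∀ n, xhat n = (p0 n)⁻¹ • ∑ m, γ n m • xj m) :
    ∀ γhat : Matrix (Fin N0) (Fin N0) ℝ,
      (∀ n k, 0 ≤ γhat n k) → (∀ n, ∑ k, γhat n k = p0 n) → (∀ k, ∑ n, γhat n k = p0 k) →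
      ∑ n, p0 n * ‖x0 n - xhat n‖ ^ 2 ≤ ∑ n, ∑ k, γhat n k * ‖x0 n - xhat k‖ ^ 2 := by
  intro γhat hnn hrow hcol
  set γ' : Matrix (Fin N0) (Fin Nj) ℝ := fun n m => ∑ k, γhat n k * γ k m / p0 k with hγ'def
  have hγ'nn : ∀ n m, 0 ≤ γ' n m := fun n m =>
    Finset.sum_nonneg fun k _ => div_nonneg (mul_nonneg (hnn n k) (hγnn k m)) (hp0 k).le
  have hγ'row : ∀ n, ∑ m, γ' n m = p0 n := by
    intro n
    calc ∑ m, γ' n m = ∑ k, ∑ m, γhat n k * γ k m / p0 k := Finset.sum_comm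
    _ = ∑ k, γhat n k := by
        refine Finset.sum_congr rfl fun k _ => ?_
        have : ∑ m, γhat n k * γ k m / p0 k = (γhat n k / p0 k) * ∑ m, γ k m := by
          rw [Finset.mul_sum]; exact Finset.sum_congr rfl fun m _ => by ring
        rw [this, hγrow k, div_mul_cancel₀ _ (hp0 k).ne']
    _ = p0 n := hrow n
  have hγ'col : ∀ m, ∑ n, γ' n m = pj m := by
    intro m
    calc ∑ n, γ' n m = ∑ k, ∑ n, γhat n k * γ k m / p0 k := Finset.sum_comm
    _ = ∑ k, γ k m := by
        refine Finset.sum_congr rfl fun k _ => ?_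
        have : ∑ n, γhat n k * γ k m / p0 k = (∑ n, γhat n k) * (γ k m / p0 k) := by
          rw [Finset.sum_mul]; exact Finset.sum_congr rfl fun n _ => by ring
        rw [this, hcol k, mul_comm]
        rw [div_mul_cancel₀ _ (hp0 k).ne']
    _ = pj m := hγcol m
  -- T η : the inner-product part of the cost
  set T : Matrix (Fin N0) (Fin Nj) ℝ → ℝ :=
    fun η => ∑ n, ∑ m, (inner ℝ (x0 n) (xj m) : ℝ) * η n m with hTdef
  have expand : ∀ η : Matrix (Fin N0) (Fin Nj) ℝ,
      (∀ n, ∑ m, η n m = p0 n) → (∀ m, ∑ n, η n m = pj m) →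
      ∑ n, ∑ m, ‖x0 n - xj m‖ ^ 2 * η n m
        = ∑ n, ‖x0 n‖ ^ 2 * p0 n - 2 * T η + ∑ m, ‖xj m‖ ^ 2 * pj m := by
    intro η hr hc
    have h1 : ∀ n m, ‖x0 n - xj m‖ ^ 2 * η n m
        = ‖x0 n‖ ^ 2 * η n m - 2 * ((inner ℝ (x0 n) (xj m) : ℝ) * η n m) + ‖xj m‖ ^ 2 * η n m := by
      intro n m
      rw [norm_sub_sq_real]
      ring
    have e3 : ∑ n, ∑ m, ‖xj m‖ ^ 2 * η n m = ∑ m, ‖xj m‖ ^ 2 * pj m := by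
      rw [Finset.sum_comm]
      refine Finset.sum_congr rfl fun m _ => ?_
      rw [← Finset.mul_sum, hc m]
    simp only [h1, Finset.sum_add_distrib, Finset.sum_sub_distrib, ← Finset.mul_sum, hr]
    rw [e3]
  have key : T γ' ≤ T γ := by
    have h := hγopt γ' hγ'nn hγ'row hγ'col
    rw [expand γ hγrow hγcol, expand γ' hγ'row hγ'col] at h
    linarith
  have hxhat_inner : ∀ n k, (inner ℝ (x0 n) (xhat k) : ℝ) = (p0 k)⁻¹ * ∑ m, γ k m * (inner ℝ (x0 n) (xj m) : ℝ) := by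
    intro n k
    rw [hxhat k, real_inner_smul_right, inner_sum]
    congr 1
    exact Finset.sum_congr rfl fun m _ => real_inner_smul_right _ _ _
  have hTγ : ∑ n, p0 n * (inner ℝ (x0 n) (xhat n) : ℝ) = T γ := by
    rw [hTdef]
    refine Finset.sum_congr rfl fun n _ => ?_
    rw [hxhat_inner n n, ← mul_assoc, mul_inv_cancel₀ (hp0 n).ne', one_mul]
    exact Finset.sum_congr rfl fun m _ => mul_comm _ _
  have hTγ' : ∑ n, ∑ k, γhat n k * (inner ℝ (x0 n) (xhat k) : ℝ) = T γ' := by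
    rw [hTdef]
    refine Finset.sum_congr rfl fun n _ => ?_
    calc ∑ k, γhat n k * (inner ℝ (x0 n) (xhat k) : ℝ)
        = ∑ k, ∑ m, (inner ℝ (x0 n) (xj m) : ℝ) * (γhat n k * γ k m / p0 k) := by
          refine Finset.sum_congr rfl fun k _ => ?_
          rw [hxhat_inner n k, Finset.mul_sum, Finset.mul_sum]
          exact Finset.sum_congr rfl fun m _ => by ring
    _ = ∑ m, ∑ k, (inner ℝ (x0 n) (xj m) : ℝ) * (γhat n k * γ k m / p0 k) := Finset.sum_comm
    _ = ∑ m, (inner ℝ (x0 n) (xj m) : ℝ) * γ' n m := by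
          refine Finset.sum_congr rfl fun m _ => ?_
          rw [hγ'def, Finset.mul_sum]
  -- expand both sides of the goal
  have h1 : ∀ n k, ‖x0 n - xhat k‖ ^ 2
      = ‖x0 n‖ ^ 2 - 2 * (inner ℝ (x0 n) (xhat k) : ℝ) + ‖xhat k‖ ^ 2 := fun n k =>
    norm_sub_sq_real _ _
  have hL : ∑ n, p0 n * ‖x0 n - xhat n‖ ^ 2
      = ∑ n, p0 n * ‖x0 n‖ ^ 2 - 2 * ∑ n, p0 n * (inner ℝ (x0 n) (xhat n) : ℝ)
        + ∑ n, p0 n * ‖xhat n‖ ^ 2 := by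
    have e : ∀ n, p0 n * ‖x0 n - xhat n‖ ^ 2
        = p0 n * ‖x0 n‖ ^ 2 - 2 * (p0 n * (inner ℝ (x0 n) (xhat n) : ℝ))
          + p0 n * ‖xhat n‖ ^ 2 := by
      intro n; rw [h1 n n]; ring
    simp only [e, Finset.sum_add_distrib, Finset.sum_sub_distrib, ← Finset.mul_sum]
  have hR : ∑ n, ∑ k, γhat n k * ‖x0 n - xhat k‖ ^ 2
      = ∑ n, p0 n * ‖x0 n‖ ^ 2 - 2 * ∑ n, ∑ k, γhat n k * (inner ℝ (x0 n) (xhat k) : ℝ)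
        + ∑ k, p0 k * ‖xhat k‖ ^ 2 := by
    have e1 : ∑ n, ∑ k, γhat n k * ‖x0 n‖ ^ 2 = ∑ n, p0 n * ‖x0 n‖ ^ 2 := by
      refine Finset.sum_congr rfl fun n _ => ?_
      rw [← Finset.sum_mul, hrow n]
    have e3 : ∑ n, ∑ k, γhat n k * ‖xhat k‖ ^ 2 = ∑ k, p0 k * ‖xhat k‖ ^ 2 := by
      rw [Finset.sum_comm]
      refine Finset.sum_congr rfl fun k _ => ?_
      rw [← Finset.sum_mul, hcol k]
    have e : ∀ n k, γhat n k * ‖x0 n - xhat k‖ ^ 2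
        = γhat n k * ‖x0 n‖ ^ 2 - 2 * (γhat n k * (inner ℝ (x0 n) (xhat k) : ℝ))
          + γhat n k * ‖xhat k‖ ^ 2 := by
      intro n k; rw [h1 n k]; ring
    simp only [e, Finset.sum_add_distrib, Finset.sum_sub_distrib, ← Finset.mul_sum]
    rw [e1, e3]
  rw [hL, hR, hTγ, hTγ']
  linarith
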